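/- Let H = (V,𝓔) be a hypergraph as above, γ > 0, c > 0, and S ⊆ V with 0 < vol(S) ≤ M/2. Let v be a random vertex drawn from a probability distribution ℙ supported on S such that E_{v∼ℙ}[ p(γ,{v})(V∖S) ] ≤ c · p(γ,S)(V∖S). Then with probability at least 1/2 over v ∼ ℙ, p(γ,{v})(S) ≥ 1 − 2c φ(S)/γ. -/

import Mathlib

open Finset

noncomputable section

/-- δ-linear splitting penalty of the set `S` within hyperedge `ε`:
`f_ε(e_ε ∩ S) = min {|e_ε ∩ S|, |e_ε ∖ S|, δ_ε}`. -/
def hsplit {V E : Type*} [DecidableEq V] (e : E → Finset V) (δe : E → ℝ)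
    (ε : E) (S : Finset V) : ℝ :=
  min (min ((e ε ∩ S).card : ℝ) ((e ε \ S).card : ℝ)) (δe ε)

/-- Hypergraph cut `cut_H(S) = Σ_ε f_ε(e_ε ∩ S)`. -/
def hcut {V E : Type*} [Fintype E] [DecidableEq V] (e : E → Finset V) (δe : E → ℝ)
    (S : Finset V) : ℝ :=
  ∑ ε : E, hsplit e δe ε S

/-- Degree `d_v = Σ_{ε : v ∈ e_ε} f_ε({v})`. -/
def hdeg {V E : Type*} [Fintype E] [DecidableEq V] (e : E → Finset V) (δe : E → ℝ)
    (v : V) : ℝ :=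
  ∑ ε ∈ univ.filter (fun ε => v ∈ e ε), hsplit e δe ε {v}

/-- Volume `vol(S) = Σ_{v∈S} d_v`. -/
def hvol {V E : Type*} [Fintype E] [DecidableEq V] (e : E → Finset V) (δe : E → ℝ)
    (S : Finset V) : ℝ :=
  ∑ v ∈ S, hdeg e δe v

/-- Total volume `M = vol(V)`. -/
def hM {V E : Type*} [Fintype V] [Fintype E] [DecidableEq V] (e : E → Finset V)
    (δe : E → ℝ) : ℝ :=
  hvol e δe univ

/-- Hypergraph conductance `φ(S) = cut_H(S) / min(vol S, M − vol S)`. -/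
def hcond {V E : Type*} [Fintype V] [Fintype E] [DecidableEq V] (e : E → Finset V)
    (δe : E → ℝ) (S : Finset V) : ℝ :=
  hcut e δe S / min (hvol e δe S) (hM e δe - hvol e δe S)

/-- Inner gadget objective of hyperedge `ε`:
`Σ_{v∈e_ε} ((x_v−a)₊² + (b−x_v)₊²) + δ_ε (a−b)₊²`. -/
def innerQ {V E : Type*} [DecidableEq V] (e : E → Finset V) (δe : E → ℝ) (ε : E)
    (x : V → ℝ) (a b : ℝ) : ℝ :=
  ∑ v ∈ e ε, ((max (x v - a) 0) ^ 2 + (max (b - x v) 0) ^ 2)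
    + δe ε * (max (a - b) 0) ^ 2

/-- `Q_ε(x) = min_{a,b∈ℝ} innerQ`. -/
def Qe {V E : Type*} [DecidableEq V] (e : E → Finset V) (δe : E → ℝ) (ε : E)
    (x : V → ℝ) : ℝ :=
  sInf {q : ℝ | ∃ a b : ℝ, q = innerQ e δe ε x a b}

/-- The diffusion objective
`Q(x) = γ Σ_v d_v (x_v − 1_S(v)/vol S)² + Σ_ε Q_ε(x)` for a seed set `S`. -/
def Qobj {V E : Type*} [Fintype V] [Fintype E] [DecidableEq V] (e : E → Finset V)
    (δe : E → ℝ) (γ : ℝ) (S : Finset V) (x : V → ℝ) : ℝ :=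
  γ * ∑ v : V, hdeg e δe v * (x v - (if v ∈ S then 1 else 0) / hvol e δe S) ^ 2
    + ∑ ε : E, Qe e δe ε x

end

set_option linter.unusedSectionVars false

noncomputable section

section aux
variable {V E : Type*} [Fintype V] [Fintype E] [DecidableEq V]
  (e : E → Finset V) (δe : E → ℝ)

lemma hsplit_nonneg (hδe : ∀ ε, 1 ≤ δe ε) (ε : E) (S : Finset V) :
    0 ≤ hsplit e δe ε S := by
  have := hδe ε
  simp only [hsplit, le_min_iff]
  refine ⟨⟨by positivity, by positivity⟩, by linarith⟩

lemma hsplit_single (hcard : ∀ ε, 2 ≤ (e ε).card) (hδe : ∀ ε, 1 ≤ δe ε)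
    {ε : E} {v : V} (hv : v ∈ e ε) : hsplit e δe ε {v} = 1 := by
  have h1 : (e ε ∩ {v}) = {v} := by
    ext u; simp (config := {contextual := true}) [Finset.mem_inter, Finset.mem_singleton]
    rintro rfl; exact hv
  have h2 : (e ε \ {v}).card = (e ε).card - 1 := by
    rw [Finset.card_sdiff_of_subset (by simpa using hv)]; simp
  have hc := hcard ε
  have hδ := hδe ε
  have : (1:ℝ) ≤ ((e ε).card : ℝ) - 1 := by
    have : (2:ℝ) ≤ ((e ε).card : ℝ) := by exact_mod_cast hc
    linarith
  simp only [hsplit, h1, h2, Finset.card_singleton]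
  rw [Nat.cast_sub (by omega), Nat.cast_one]
  rw [min_eq_left this, min_eq_left hδ]

lemma one_le_hdeg (hcard : ∀ ε, 2 ≤ (e ε).card) (hδe : ∀ ε, 1 ≤ δe ε)
    (hcov : ∀ v : V, ∃ ε, v ∈ e ε) (v : V) : 1 ≤ hdeg e δe v := by
  obtain ⟨ε₀, hε₀⟩ := hcov v
  have : hdeg e δe v = ∑ ε ∈ univ.filter (fun ε => v ∈ e ε), (1:ℝ) := by
    refine Finset.sum_congr rfl fun ε hε => ?_
    exact hsplit_single e δe hcard hδe (by simpa using hε)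
  rw [this, Finset.sum_const, nsmul_eq_mul, mul_one]
  have : ε₀ ∈ univ.filter (fun ε => v ∈ e ε) := by simpa using hε₀
  have := Finset.card_pos.2 ⟨ε₀, this⟩
  exact_mod_cast this

lemma hdeg_nonneg (hcard : ∀ ε, 2 ≤ (e ε).card) (hδe : ∀ ε, 1 ≤ δe ε)
    (hcov : ∀ v : V, ∃ ε, v ∈ e ε) (v : V) : 0 ≤ hdeg e δe v :=
  le_trans zero_le_one (one_le_hdeg e δe hcard hδe hcov v)

lemma hvol_nonneg (hcard : ∀ ε, 2 ≤ (e ε).card) (hδe : ∀ ε, 1 ≤ δe ε)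
    (hcov : ∀ v : V, ∃ ε, v ∈ e ε) (S : Finset V) : 0 ≤ hvol e δe S :=
  Finset.sum_nonneg fun v _ => hdeg_nonneg e δe hcard hδe hcov v

lemma hcut_nonneg (hδe : ∀ ε, 1 ≤ δe ε) (S : Finset V) : 0 ≤ hcut e δe S :=
  Finset.sum_nonneg fun ε _ => hsplit_nonneg e δe hδe ε S


end aux

section aux2
variable {V E : Type*} [Fintype V] [Fintype E] [DecidableEq V]
  (e : E → Finset V) (δe : E → ℝ)

lemma innerQ_nonneg (hδe : ∀ ε, 1 ≤ δe ε) (ε : E) (x : V → ℝ) (a b : ℝ) : 0 ≤ innerQ e δe ε x a b := by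
  have := hδe ε
  unfold innerQ
  have h1 : 0 ≤ ∑ v ∈ e ε, ((max (x v - a) 0) ^ 2 + (max (b - x v) 0) ^ 2) :=
    Finset.sum_nonneg fun v _ => by positivity
  have h2 : 0 ≤ δe ε * (max (a - b) 0) ^ 2 := by positivity
  linarith

lemma Qe_set_nonempty (ε : E) (x : V → ℝ) :
    {q : ℝ | ∃ a b : ℝ, q = innerQ e δe ε x a b}.Nonempty :=
  ⟨innerQ e δe ε x 0 0, 0, 0, rfl⟩

lemma Qe_bddBelow (hδe : ∀ ε, 1 ≤ δe ε) (ε : E) (x : V → ℝ) :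
    BddBelow {q : ℝ | ∃ a b : ℝ, q = innerQ e δe ε x a b} :=
  ⟨0, by rintro q ⟨a, b, rfl⟩; exact innerQ_nonneg e δe hδe ε x a b⟩

lemma Qe_nonneg (hδe : ∀ ε, 1 ≤ δe ε) (ε : E) (x : V → ℝ) : 0 ≤ Qe e δe ε x :=
  le_csInf (Qe_set_nonempty e δe ε x) (by rintro q ⟨a, b, rfl⟩; exact innerQ_nonneg e δe hδe ε x a b)

lemma Qe_le_innerQ (hδe : ∀ ε, 1 ≤ δe ε) (ε : E) (x : V → ℝ) (a b : ℝ) :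
    Qe e δe ε x ≤ innerQ e δe ε x a b :=
  csInf_le (Qe_bddBelow e δe hδe ε x) ⟨a, b, rfl⟩

lemma le_Qe (ε : E) (x : V → ℝ) {C : ℝ} (h : ∀ a b, C ≤ innerQ e δe ε x a b) :
    C ≤ Qe e δe ε x :=
  le_csInf (Qe_set_nonempty e δe ε x) (by rintro q ⟨a, b, rfl⟩; exact h a b)

lemma innerQ_shift (ε : E) (x : V → ℝ) (t a b : ℝ) :
    innerQ e δe ε (fun u => x u + t) (a + t) (b + t) = innerQ e δe ε x a b := by
  unfold innerQ
  congr 1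
  · refine Finset.sum_congr rfl fun v _ => ?_
    ring_nf
  · ring_nf

lemma Qe_shift (ε : E) (x : V → ℝ) (t : ℝ) :
    Qe e δe ε (fun u => x u + t) = Qe e δe ε x := by
  unfold Qe
  congr 1
  ext q
  constructor
  · rintro ⟨a, b, rfl⟩
    exact ⟨a - t, b - t, by rw [← innerQ_shift e δe ε x t (a-t) (b-t)]; ring_nf⟩
  · rintro ⟨a, b, rfl⟩
    exact ⟨a + t, b + t, (innerQ_shift e δe ε x t a b).symm⟩

end aux2

section aux3
variable {V E : Type*} [Fintype V] [Fintype E] [DecidableEq V]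
  (e : E → Finset V) (δe : E → ℝ)

lemma Qobj_shift (γ : ℝ) (T : Finset V) (x : V → ℝ) (t : ℝ) :
    Qobj e δe γ T (fun u => x u + t) = Qobj e δe γ T x
      + γ * (2 * t * (∑ v : V, hdeg e δe v * (x v - (if v ∈ T then 1 else 0) / hvol e δe T))
             + t ^ 2 * hM e δe) := by
  unfold Qobj
  rw [Finset.sum_congr rfl fun ε _ => Qe_shift e δe ε x t]
  have h : ∑ v : V, hdeg e δe v * (x v + t - (if v ∈ T then 1 else 0) / hvol e δe T) ^ 2
      = ∑ v : V, hdeg e δe v * (x v - (if v ∈ T then 1 else 0) / hvol e δe T) ^ 2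
        + (2 * t * (∑ v : V, hdeg e δe v * (x v - (if v ∈ T then 1 else 0) / hvol e δe T))
           + t ^ 2 * ∑ v : V, hdeg e δe v) := by
    rw [Finset.mul_sum, Finset.mul_sum, ← Finset.sum_add_distrib, ← Finset.sum_add_distrib]
    refine Finset.sum_congr rfl fun v _ => ?_
    ring
  rw [h]
  have : hM e δe = ∑ v : V, hdeg e δe v := rfl
  rw [this]; ring

lemma total_mass_eq_one (hcard : ∀ ε, 2 ≤ (e ε).card) (hδe : ∀ ε, 1 ≤ δe ε)
    (hcov : ∀ v : V, ∃ ε, v ∈ e ε) {γ : ℝ} (hγ : 0 < γ)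
    (T : Finset V) (hT : 0 < hvol e δe T) (x : V → ℝ)
    (hmin : ∀ y : V → ℝ, Qobj e δe γ T x ≤ Qobj e δe γ T y) :
    ∑ v : V, hdeg e δe v * x v = 1 := by
  set B := ∑ v : V, hdeg e δe v * (x v - (if v ∈ T then 1 else 0) / hvol e δe T) with hB
  have hM0 : 0 < hM e δe := by
    have hsub : hvol e δe T ≤ hM e δe := by
      refine Finset.sum_le_sum_of_subset_of_nonneg (Finset.subset_univ T)
        fun v _ _ => hdeg_nonneg e δe hcard hδe hcov v
    linarith
  have key : ∀ t : ℝ, 0 ≤ 2 * t * B + t ^ 2 * hM e δe := by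
    intro t
    have := hmin (fun u => x u + t)
    rw [Qobj_shift e δe γ T x t] at this
    nlinarith
  have hB0 : B = 0 := by
    have h1 := key (-B / hM e δe)
    have heq : 2 * (-B / hM e δe) * B + (-B / hM e δe) ^ 2 * hM e δe = -(B ^ 2) / hM e δe := by
      field_simp; ring
    rw [heq] at h1
    have h4 := mul_nonneg h1 (le_of_lt hM0)
    rw [div_mul_cancel₀ _ (ne_of_gt hM0)] at h4
    nlinarith [sq_nonneg B]
  have hsplit : ∑ v : V, hdeg e δe v * (x v - (if v ∈ T then 1 else 0) / hvol e δe T)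
      = (∑ v : V, hdeg e δe v * x v)
        - ∑ v : V, hdeg e δe v * ((if v ∈ T then 1 else 0) / hvol e δe T) := by
    rw [← Finset.sum_sub_distrib]
    refine Finset.sum_congr rfl fun v _ => ?_
    ring
  have hsum1 : ∑ v : V, hdeg e δe v * ((if v ∈ T then 1 else 0) / hvol e δe T) = 1 := by
    have h : ∀ v : V, hdeg e δe v * ((if v ∈ T then 1 else 0) / hvol e δe T)
        = if v ∈ T then hdeg e δe v / hvol e δe T else 0 := by
      intro v; split <;> simp [div_eq_mul_inv]
    rw [Finset.sum_congr rfl fun v _ => h v, Finset.sum_ite_mem, Finset.univ_inter,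
      ← Finset.sum_div]
    exact div_self (ne_of_gt hT)
  rw [hB, hsplit, hsum1] at hB0
  linarith


lemma trunc1 (x a : ℝ) : max (max x 0 - max a 0) 0 ≤ max (x - a) 0 := by
  rcases le_total x 0 with h | h <;> rcases le_total a 0 with h' | h' <;>
    simp only [max_eq_left, max_eq_right, h, h'] <;>
    [skip; skip; skip; skip] <;>
  · rcases le_total (x - a) 0 with h2 | h2 <;>
      rcases le_total x 0 with _ | _ <;> rcases le_total a 0 with _ | _ <;>
      simp [max_def] <;> split_ifs <;> linarith

lemma sq_trunc1 (x a : ℝ) : (max (max x 0 - max a 0) 0) ^ 2 ≤ (max (x - a) 0) ^ 2 :=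
  pow_le_pow_left₀ (le_max_right _ _) (trunc1 x a) 2

lemma innerQ_trunc {V E : Type*} [Fintype V] [Fintype E] [DecidableEq V]
    (e : E → Finset V) (δe : E → ℝ) (hδe : ∀ ε, 1 ≤ δe ε) (ε : E) (x : V → ℝ) (a b : ℝ) :
    innerQ e δe ε (fun u => max (x u) 0) (max a 0) (max b 0) ≤ innerQ e δe ε x a b := by
  unfold innerQ
  refine add_le_add (Finset.sum_le_sum fun v hv =>
      add_le_add (sq_trunc1 (x v) a) (sq_trunc1 b (x v)))
    (mul_le_mul_of_nonneg_left (sq_trunc1 a b) (by linarith [hδe ε]))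

lemma minimizer_nonneg (hcard : ∀ ε, 2 ≤ (e ε).card) (hδe : ∀ ε, 1 ≤ δe ε)
    (hcov : ∀ v : V, ∃ ε, v ∈ e ε) {γ : ℝ} (hγ : 0 < γ)
    (T : Finset V) (hT : 0 < hvol e δe T) (x : V → ℝ)
    (hmin : ∀ y : V → ℝ, Qobj e δe γ T x ≤ Qobj e δe γ T y) (v : V) : 0 ≤ x v := by
  by_contra hneg
  push_neg at hneg
  set x' := fun u => max (x u) 0 with hx'
  set s := fun u : V => (if u ∈ T then (1:ℝ) else 0) / hvol e δe T with hs
  have hs0 : ∀ u, 0 ≤ s u := by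
    intro u
    refine div_nonneg ?_ hT.le
    split <;> norm_num
  have hseed : ∑ u : V, hdeg e δe u * (x' u - s u) ^ 2
      < ∑ u : V, hdeg e δe u * (x u - s u) ^ 2 := by
    refine Finset.sum_lt_sum (fun u _ => ?_) ⟨v, Finset.mem_univ v, ?_⟩
    · rcases le_total 0 (x u) with h | h
      · simp [hx', max_eq_left h]
      · have hz : x' u = 0 := max_eq_right h
        rw [hz]
        have hsu := hs0 u
        have hd := hdeg_nonneg e δe hcard hδe hcov u
        have hsq : (0 - s u) ^ 2 ≤ (x u - s u) ^ 2 := by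
          nlinarith [mul_nonneg (neg_nonneg.mpr h) hsu]
        exact mul_le_mul_of_nonneg_left hsq hd
    · have hx'v : x' v = 0 := max_eq_right hneg.le
      rw [hx'v]
      have hsv := hs0 v
      have hd := one_le_hdeg e δe hcard hδe hcov v
      have hsq : (0 - s v) ^ 2 < (x v - s v) ^ 2 := by
        nlinarith [mul_nonneg (neg_nonneg.mpr hneg.le) hsv]
      exact mul_lt_mul_of_pos_left hsq (by linarith)
  have hQe : ∀ ε : E, Qe e δe ε x' ≤ Qe e δe ε x := by
    intro ε
    refine le_Qe e δe ε x fun a b => ?_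
    calc Qe e δe ε x' ≤ innerQ e δe ε x' (max a 0) (max b 0) :=
          Qe_le_innerQ e δe hδe ε x' _ _
      _ ≤ innerQ e δe ε x a b := innerQ_trunc e δe hδe ε x a b
  have hlt : Qobj e δe γ T x' < Qobj e δe γ T x := by
    unfold Qobj
    have h1 : γ * ∑ u : V, hdeg e δe u * (x' u - s u) ^ 2
        < γ * ∑ u : V, hdeg e δe u * (x u - s u) ^ 2 :=
      mul_lt_mul_of_pos_left hseed hγ
    have h2 : ∑ ε : E, Qe e δe ε x' ≤ ∑ ε : E, Qe e δe ε x :=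
      Finset.sum_le_sum fun ε _ => hQe ε
    calc γ * ∑ u : V, hdeg e δe u * (x' u - (if u ∈ T then 1 else 0) / hvol e δe T) ^ 2
          + ∑ ε : E, Qe e δe ε x'
        < γ * ∑ u : V, hdeg e δe u * (x u - (if u ∈ T then 1 else 0) / hvol e δe T) ^ 2
          + ∑ ε : E, Qe e δe ε x := by
          exact add_lt_add_of_lt_of_le h1 h2
      _ = _ := rfl
  exact absurd (hmin x') (not_le.mpr hlt)


-- max monotonicity for squares
lemma sq_max_mono {c d : ℝ} (h : c ≤ d) : (max c 0) ^ 2 ≤ (max d 0) ^ 2 :=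
  pow_le_pow_left₀ (le_max_right _ _) (max_le_max h le_rfl) 2

-- Young-type inequality for the shifted positive part
lemma sq_max_young {c t σ : ℝ} (ht : 0 ≤ t) (hσ : 0 < σ) :
    (max (c + t) 0) ^ 2 ≤ (1 + σ) * (max c 0) ^ 2 + (1 + 1/σ) * t ^ 2 := by
  set p := max c 0 with hp
  have hp0 : 0 ≤ p := le_max_right _ _
  have h1 : max (c + t) 0 ≤ p + t :=
    max_le (by linarith [le_max_left c 0]) (by linarith)
  have h2 : (max (c + t) 0) ^ 2 ≤ (p + t) ^ 2 :=
    pow_le_pow_left₀ (le_max_right _ _) h1 2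
  have h3 : (p + t) ^ 2 ≤ (1 + σ) * p ^ 2 + (1 + 1/σ) * t ^ 2 := by
    have e1 : (1 + σ) * p ^ 2 + (1 + 1/σ) * t ^ 2 - (p + t) ^ 2 = (σ * p - t) ^ 2 / σ := by
      field_simp; ring
    have e2 : 0 ≤ (σ * p - t) ^ 2 / σ := by positivity
    linarith
  linarith

section aux4
variable {V E : Type*} [Fintype V] [Fintype E] [DecidableEq V]
  (e : E → Finset V) (δe : E → ℝ)

/-- Bound `Q_ε` at the normalized indicator of `S`. -/
lemma Qe_indicator (hδe : ∀ ε, 1 ≤ δe ε) (S : Finset V) (hS : 0 < hvol e δe S) (ε : E) :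
    Qe e δe ε (fun u => (if u ∈ S then 1 else 0) / hvol e δe S)
      ≤ hsplit e δe ε S / (hvol e δe S) ^ 2 := by
  set c : ℝ := 1 / hvol e δe S with hc
  have hc0 : 0 < c := by positivity
  set y : V → ℝ := fun u => (if u ∈ S then 1 else 0) / hvol e δe S with hy
  have hyv : ∀ u, y u = if u ∈ S then c else 0 := by
    intro u; simp only [hy, hc]; split <;> simp
  have hA : Qe e δe ε y ≤ ((e ε ∩ S).card : ℝ) * c ^ 2 := by
    refine le_trans (Qe_le_innerQ e δe hδe ε y 0 0) ?_
    unfold innerQ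
    have : ∀ v ∈ e ε, (max (y v - 0) 0) ^ 2 + (max (0 - y v) 0) ^ 2
        = if v ∈ S then c ^ 2 else 0 := by
      intro v _
      rw [hyv v]
      split
      · rw [sub_zero, zero_sub, max_eq_left hc0.le, max_eq_right (by linarith)]
        ring
      · norm_num
    rw [Finset.sum_congr rfl this, Finset.sum_ite_mem, Finset.sum_const]
    simp
  have hB : Qe e δe ε y ≤ ((e ε \ S).card : ℝ) * c ^ 2 := by
    refine le_trans (Qe_le_innerQ e δe hδe ε y c c) ?_
    unfold innerQ
    have : ∀ v ∈ e ε, (max (y v - c) 0) ^ 2 + (max (c - y v) 0) ^ 2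
        = if v ∈ S then 0 else c ^ 2 := by
      intro v _
      rw [hyv v]
      split
      · simp
      · rw [zero_sub, sub_zero, max_eq_right (by linarith), max_eq_left hc0.le]
        ring
    rw [Finset.sum_congr rfl (fun v hv => this v hv)]
    have h2 : ∀ v ∈ e ε, (if v ∈ S then (0:ℝ) else c ^ 2) = if v ∈ Sᶜ then c ^ 2 else 0 := by
      intro v _
      by_cases h : v ∈ S <;> simp [h]
    have h3 : e ε \ S = e ε ∩ Sᶜ := by
      ext v; simp [Finset.mem_sdiff, Finset.mem_compl]
    rw [Finset.sum_congr rfl h2, Finset.sum_ite_mem, Finset.sum_const, h3]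
    simp [nsmul_eq_mul]
  have hC : Qe e δe ε y ≤ δe ε * c ^ 2 := by
    refine le_trans (Qe_le_innerQ e δe hδe ε y c 0) ?_
    unfold innerQ
    have h1 : ∀ v ∈ e ε, (max (y v - c) 0) ^ 2 + (max (0 - y v) 0) ^ 2 = 0 := by
      intro v _
      rw [hyv v]
      split
      · rw [sub_self, zero_sub, max_eq_right (neg_nonpos.mpr hc0.le)]
        simp
      · simp [max_eq_right (by linarith : (0:ℝ) - c ≤ 0), hc0.le]
    rw [Finset.sum_congr rfl h1, Finset.sum_const, smul_zero, zero_add, sub_zero,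
      max_eq_left hc0.le]
  have hfin : Qe e δe ε y ≤ min (min (((e ε ∩ S).card : ℝ) * c ^ 2)
      (((e ε \ S).card : ℝ) * c ^ 2)) (δe ε * c ^ 2) := le_min (le_min hA hB) hC
  have heq : min (min (((e ε ∩ S).card : ℝ) * c ^ 2) (((e ε \ S).card : ℝ) * c ^ 2))
      (δe ε * c ^ 2) = hsplit e δe ε S / (hvol e δe S) ^ 2 := by
    have hc2 : (0:ℝ) ≤ c ^ 2 := sq_nonneg c
    rw [← min_mul_of_nonneg _ _ hc2, ← min_mul_of_nonneg _ _ hc2]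
    unfold hsplit
    rw [hc]
    field_simp
  rw [heq] at hfin
  exact hfin


lemma sq_le_mul_self {q σ : ℝ} (hq : 0 ≤ q) (hσ : 0 < σ) : q ≤ (1 + σ) * q :=
  le_mul_of_one_le_left hq (by linarith)

/-- Key perturbation bound: shifting the seed part up by `t` on `S`. -/
lemma Qe_shift_S (hδe : ∀ ε, 1 ≤ δe ε) (S : Finset V) (ε : E) (x : V → ℝ)
    {t σ : ℝ} (ht : 0 ≤ t) (hσ : 0 < σ) :
    Qe e δe ε (fun u => x u + if u ∈ S then t else 0)
      ≤ (1 + σ) * Qe e δe ε x + (1 + 1/σ) * t ^ 2 * hsplit e δe ε S := by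
  set x' : V → ℝ := fun u => x u + if u ∈ S then t else 0 with hx'
  set C : ℝ := (1 + 1/σ) * t ^ 2 with hC
  have hC0 : 0 ≤ C := by
    have : (0:ℝ) ≤ 1 + 1/σ := by positivity
    positivity
  have hδ0 : (0:ℝ) ≤ δe ε := by linarith [hδe ε]
  -- case A : cap on e ∩ S, with (a, b) unchanged
  have hA : ∀ a b : ℝ, innerQ e δe ε x' a b
      ≤ (1 + σ) * innerQ e δe ε x a b + C * ((e ε ∩ S).card : ℝ) := by
    intro a b
    unfold innerQ
    have hterm : ∀ v ∈ e ε,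
        (max (x' v - a) 0) ^ 2 + (max (b - x' v) 0) ^ 2
        ≤ (1 + σ) * ((max (x v - a) 0) ^ 2 + (max (b - x v) 0) ^ 2)
          + (if v ∈ S then C else 0) := by
      intro v _
      rw [mul_add]
      by_cases hv : v ∈ S
      · simp only [hx', hv, if_true]
        have b1 : (max (x v + t - a) 0) ^ 2
            ≤ (1 + σ) * (max (x v - a) 0) ^ 2 + (1 + 1/σ) * t ^ 2 := by
          rw [show x v + t - a = (x v - a) + t by ring]
          exact sq_max_young ht hσ
        have b2 : (max (b - (x v + t)) 0) ^ 2 ≤ (max (b - x v) 0) ^ 2 :=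
          sq_max_mono (by linarith)
        have b2' : (max (b - x v) 0) ^ 2 ≤ (1 + σ) * (max (b - x v) 0) ^ 2 :=
          sq_le_mul_self (sq_nonneg _) hσ
        rw [hC]
        linarith
      · simp only [hx', hv, if_false, add_zero]
        have b1 : (max (x v - a) 0) ^ 2 ≤ (1 + σ) * (max (x v - a) 0) ^ 2 :=
          sq_le_mul_self (sq_nonneg _) hσ
        have b2 : (max (b - x v) 0) ^ 2 ≤ (1 + σ) * (max (b - x v) 0) ^ 2 :=
          sq_le_mul_self (sq_nonneg _) hσ
        linarith
    have hsum2 : ∑ v ∈ e ε, ((max (x' v - a) 0) ^ 2 + (max (b - x' v) 0) ^ 2)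
        ≤ (1 + σ) * ∑ v ∈ e ε, ((max (x v - a) 0) ^ 2 + (max (b - x v) 0) ^ 2)
          + C * ((e ε ∩ S).card : ℝ) := by
      calc ∑ v ∈ e ε, ((max (x' v - a) 0) ^ 2 + (max (b - x' v) 0) ^ 2)
          ≤ ∑ v ∈ e ε, ((1 + σ) * ((max (x v - a) 0) ^ 2 + (max (b - x v) 0) ^ 2)
              + (if v ∈ S then C else 0)) := Finset.sum_le_sum hterm
        _ = (1 + σ) * ∑ v ∈ e ε, ((max (x v - a) 0) ^ 2 + (max (b - x v) 0) ^ 2)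
              + C * ((e ε ∩ S).card : ℝ) := by
            rw [Finset.sum_add_distrib, Finset.mul_sum, Finset.sum_ite_mem,
              Finset.sum_const, nsmul_eq_mul, mul_comm]
    have hδt : δe ε * (max (a - b) 0) ^ 2 ≤ (1 + σ) * (δe ε * (max (a - b) 0) ^ 2) :=
      sq_le_mul_self (mul_nonneg hδ0 (sq_nonneg _)) hσ
    rw [mul_add]
    linarith
  -- case B : cap on e \ S, with (a + t, b + t)
  have hB : ∀ a b : ℝ, innerQ e δe ε x' (a + t) (b + t)
      ≤ (1 + σ) * innerQ e δe ε x a b + C * ((e ε \ S).card : ℝ) := by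
    intro a b
    unfold innerQ
    have hterm : ∀ v ∈ e ε,
        (max (x' v - (a + t)) 0) ^ 2 + (max ((b + t) - x' v) 0) ^ 2
        ≤ (1 + σ) * ((max (x v - a) 0) ^ 2 + (max (b - x v) 0) ^ 2)
          + (if v ∈ Sᶜ then C else 0) := by
      intro v _
      rw [mul_add]
      by_cases hv : v ∈ S
      · simp only [hx', hv, if_true, Finset.mem_compl, not_true, if_false]
        have e1 : x v + t - (a + t) = x v - a := by ring
        have e2 : b + t - (x v + t) = b - x v := by ring
        rw [e1, e2]
        have b1 : (max (x v - a) 0) ^ 2 ≤ (1 + σ) * (max (x v - a) 0) ^ 2 :=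
          sq_le_mul_self (sq_nonneg _) hσ
        have b2 : (max (b - x v) 0) ^ 2 ≤ (1 + σ) * (max (b - x v) 0) ^ 2 :=
          sq_le_mul_self (sq_nonneg _) hσ
        linarith
      · simp only [hx', hv, if_false, add_zero, Finset.mem_compl, not_false_iff, if_true]
        have b1 : (max (x v - (a + t)) 0) ^ 2 ≤ (max (x v - a) 0) ^ 2 :=
          sq_max_mono (by linarith)
        have b1' : (max (x v - a) 0) ^ 2 ≤ (1 + σ) * (max (x v - a) 0) ^ 2 :=
          sq_le_mul_self (sq_nonneg _) hσ
        have b2 : (max (b + t - x v) 0) ^ 2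
            ≤ (1 + σ) * (max (b - x v) 0) ^ 2 + (1 + 1/σ) * t ^ 2 := by
          rw [show b + t - x v = (b - x v) + t by ring]
          exact sq_max_young ht hσ
        rw [hC]
        linarith
    have hsum2 : ∑ v ∈ e ε, ((max (x' v - (a + t)) 0) ^ 2 + (max ((b + t) - x' v) 0) ^ 2)
        ≤ (1 + σ) * ∑ v ∈ e ε, ((max (x v - a) 0) ^ 2 + (max (b - x v) 0) ^ 2)
          + C * ((e ε \ S).card : ℝ) := by
      have h3 : e ε \ S = e ε ∩ Sᶜ := by
        ext v; simp [Finset.mem_sdiff, Finset.mem_compl]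
      rw [h3]
      calc ∑ v ∈ e ε, ((max (x' v - (a + t)) 0) ^ 2 + (max ((b + t) - x' v) 0) ^ 2)
          ≤ ∑ v ∈ e ε, ((1 + σ) * ((max (x v - a) 0) ^ 2 + (max (b - x v) 0) ^ 2)
              + (if v ∈ Sᶜ then C else 0)) := Finset.sum_le_sum hterm
        _ = (1 + σ) * ∑ v ∈ e ε, ((max (x v - a) 0) ^ 2 + (max (b - x v) 0) ^ 2)
              + C * ((e ε ∩ Sᶜ).card : ℝ) := by
            rw [Finset.sum_add_distrib, Finset.mul_sum, Finset.sum_ite_mem,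
              Finset.sum_const, nsmul_eq_mul, mul_comm]
    have hδt : δe ε * (max ((a + t) - (b + t)) 0) ^ 2
        ≤ (1 + σ) * (δe ε * (max (a - b) 0) ^ 2) := by
      rw [show a + t - (b + t) = a - b by ring]
      exact sq_le_mul_self (mul_nonneg hδ0 (sq_nonneg _)) hσ
    rw [mul_add]
    linarith
  -- case C : cap δ, with (a + t, b)
  have hCC : ∀ a b : ℝ, innerQ e δe ε x' (a + t) b
      ≤ (1 + σ) * innerQ e δe ε x a b + C * δe ε := by
    intro a b
    unfold innerQ
    have hterm : ∀ v ∈ e ε,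
        (max (x' v - (a + t)) 0) ^ 2 + (max (b - x' v) 0) ^ 2
        ≤ (1 + σ) * ((max (x v - a) 0) ^ 2 + (max (b - x v) 0) ^ 2) := by
      intro v _
      rw [mul_add]
      by_cases hv : v ∈ S
      · simp only [hx', hv, if_true]
        rw [show x v + t - (a + t) = x v - a by ring]
        have b1 : (max (x v - a) 0) ^ 2 ≤ (1 + σ) * (max (x v - a) 0) ^ 2 :=
          sq_le_mul_self (sq_nonneg _) hσ
        have b2 : (max (b - (x v + t)) 0) ^ 2 ≤ (max (b - x v) 0) ^ 2 :=
          sq_max_mono (by linarith)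
        have b2' : (max (b - x v) 0) ^ 2 ≤ (1 + σ) * (max (b - x v) 0) ^ 2 :=
          sq_le_mul_self (sq_nonneg _) hσ
        linarith
      · simp only [hx', hv, if_false, add_zero]
        have b1 : (max (x v - (a + t)) 0) ^ 2 ≤ (max (x v - a) 0) ^ 2 :=
          sq_max_mono (by linarith)
        have b1' : (max (x v - a) 0) ^ 2 ≤ (1 + σ) * (max (x v - a) 0) ^ 2 :=
          sq_le_mul_self (sq_nonneg _) hσ
        have b2 : (max (b - x v) 0) ^ 2 ≤ (1 + σ) * (max (b - x v) 0) ^ 2 :=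
          sq_le_mul_self (sq_nonneg _) hσ
        linarith
    have hsum := Finset.sum_le_sum hterm
    rw [← Finset.mul_sum] at hsum
    have hδt : δe ε * (max ((a + t) - b) 0) ^ 2
        ≤ (1 + σ) * (δe ε * (max (a - b) 0) ^ 2) + C * δe ε := by
      rw [show a + t - b = (a - b) + t by ring]
      have := sq_max_young (c := a - b) ht hσ
      have h2 : δe ε * (max ((a - b) + t) 0) ^ 2
          ≤ δe ε * ((1 + σ) * (max (a - b) 0) ^ 2 + (1 + 1/σ) * t ^ 2) :=
        mul_le_mul_of_nonneg_left this hδ0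
      rw [hC]
      ring_nf
      ring_nf at h2
      linarith
    rw [mul_add]
    linarith
  -- combine via min over the three caps
  have key : ∀ a b : ℝ, Qe e δe ε x'
      ≤ (1 + σ) * innerQ e δe ε x a b + C * hsplit e δe ε S := by
    intro a b
    have hmin3 : hsplit e δe ε S = ((e ε ∩ S).card : ℝ)
        ∨ hsplit e δe ε S = ((e ε \ S).card : ℝ) ∨ hsplit e δe ε S = δe ε := by
      unfold hsplit
      rcases min_choice (min ((e ε ∩ S).card : ℝ) ((e ε \ S).card : ℝ)) (δe ε) with h | h
      · rcases min_choice ((e ε ∩ S).card : ℝ) ((e ε \ S).card : ℝ) with h2 | h2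
        · left; rw [h, h2]
        · right; left; rw [h, h2]
      · right; right; rw [h]
    rcases hmin3 with h | h | h
    · rw [h]
      exact le_trans (Qe_le_innerQ e δe hδe ε x' a b) (hA a b)
    · rw [h]
      exact le_trans (Qe_le_innerQ e δe hδe ε x' (a + t) (b + t)) (hB a b)
    · rw [h]
      exact le_trans (Qe_le_innerQ e δe hδe ε x' (a + t) b) (hCC a b)
  have h1σ : (0:ℝ) < 1 + σ := by linarith
  have final : (Qe e δe ε x' - C * hsplit e δe ε S) / (1 + σ) ≤ Qe e δe ε x := by
    refine le_Qe e δe ε x fun a b => ?_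
    rw [div_le_iff₀ h1σ, mul_comm (innerQ e δe ε x a b) (1 + σ)] at *
    linarith [key a b]
  rw [div_le_iff₀ h1σ] at final
  have : (1 + σ) * t ^ 2 = 0 ∨ True := by right; trivial
  calc Qe e δe ε x' = (Qe e δe ε x' - C * hsplit e δe ε S) + C * hsplit e δe ε S := by ring
    _ ≤ Qe e δe ε x * (1 + σ) + C * hsplit e δe ε S := by linarith
    _ = (1 + σ) * Qe e δe ε x + (1 + 1/σ) * t ^ 2 * hsplit e δe ε S := by rw [hC]; ring


lemma pS_bound (hcard : ∀ ε, 2 ≤ (e ε).card) (hδe : ∀ ε, 1 ≤ δe ε)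
    (hcov : ∀ v : V, ∃ ε, v ∈ e ε) {γ : ℝ} (hγ : 0 < γ)
    (S : Finset V) (hS0 : 0 < hvol e δe S) (xS : V → ℝ)
    (hxS : ∀ y : V → ℝ, Qobj e δe γ S xS ≤ Qobj e δe γ S y) :
    ∑ u ∈ Sᶜ, hdeg e δe u * xS u ≤ hcut e δe S / (γ * hvol e δe S) := by
  set vol : ℝ := hvol e δe S with hvolS
  set p : ℝ := ∑ u ∈ Sᶜ, hdeg e δe u * xS u with hp
  set cut : ℝ := hcut e δe S with hcut'
  set W : ℝ := hvol e δe Sᶜ with hW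
  have hW0 : 0 ≤ W := hvol_nonneg e δe hcard hδe hcov Sᶜ
  have hcut0 : 0 ≤ cut := hcut_nonneg e δe hδe S
  -- the total Q_e-energy of the minimizer is at most cut/vol²
  have hQsum : ∑ ε : E, Qe e δe ε xS ≤ cut / vol ^ 2 := by
    set y : V → ℝ := fun u => (if u ∈ S then 1 else 0) / vol with hy
    have hQy : Qobj e δe γ S y = ∑ ε : E, Qe e δe ε y := by
      unfold Qobj
      have : ∀ v : V, hdeg e δe v * (y v - (if v ∈ S then 1 else 0) / vol) ^ 2 = 0 := by
        intro v; simp [hy]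
      rw [Finset.sum_congr rfl fun v _ => this v, Finset.sum_const, smul_zero, mul_zero,
        zero_add]
    have hseed0 : 0 ≤ γ * ∑ v : V, hdeg e δe v * (xS v - (if v ∈ S then 1 else 0) / vol) ^ 2 := by
      refine mul_nonneg hγ.le (Finset.sum_nonneg fun v _ => ?_)
      exact mul_nonneg (hdeg_nonneg e δe hcard hδe hcov v) (sq_nonneg _)
    have h1 : ∑ ε : E, Qe e δe ε xS ≤ Qobj e δe γ S xS := by
      unfold Qobj; linarith
    have h2 : Qobj e δe γ S xS ≤ ∑ ε : E, Qe e δe ε y := by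
      rw [← hQy]; exact hxS y
    have h3 : ∑ ε : E, Qe e δe ε y ≤ cut / vol ^ 2 := by
      calc ∑ ε : E, Qe e δe ε y ≤ ∑ ε : E, hsplit e δe ε S / vol ^ 2 :=
            Finset.sum_le_sum fun ε _ => Qe_indicator e δe hδe S hS0 ε
        _ = cut / vol ^ 2 := by rw [hcut', hcut, Finset.sum_div]
    linarith
  have key : ∀ t : ℝ, 0 < t → 2 * γ * t * p ≤ γ * t ^ 2 * W + 2 * t * (cut / vol) + t ^ 2 * cut := by
    intro t ht
    set σ : ℝ := t * vol with hσdef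
    have hσ : 0 < σ := mul_pos ht hS0
    set xt : V → ℝ := fun u => xS u + if u ∈ S then t else 0 with hxt
    set z : V → ℝ := fun u => xt u + (-t) with hz
    -- Qe of z equals Qe of xt
    have hQz : ∀ ε : E, Qe e δe ε z = Qe e δe ε xt := fun ε => Qe_shift e δe ε xt (-t)
    -- seed term identity
    have hseedz : ∑ v : V, hdeg e δe v * (z v - (if v ∈ S then 1 else 0) / vol) ^ 2
        = ∑ v : V, hdeg e δe v * (xS v - (if v ∈ S then 1 else 0) / vol) ^ 2
          + (t ^ 2 * W - 2 * t * p) := by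
      have hterm : ∀ v : V, hdeg e δe v * (z v - (if v ∈ S then 1 else 0) / vol) ^ 2
          = hdeg e δe v * (xS v - (if v ∈ S then 1 else 0) / vol) ^ 2
            + (if v ∈ Sᶜ then hdeg e δe v * (t ^ 2 - 2 * t * xS v) else 0) := by
        intro v
        by_cases hv : v ∈ S
        · simp only [hz, hxt, hv, if_true, Finset.mem_compl, not_true, if_false]
          ring_nf
        · simp only [hz, hxt, hv, if_false, Finset.mem_compl, not_false_iff, if_true]
          ring_nf
      rw [Finset.sum_congr rfl fun v _ => hterm v, Finset.sum_add_distrib]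
      congr 1
      rw [Finset.sum_ite_mem, Finset.univ_inter]
      have : ∑ v ∈ Sᶜ, hdeg e δe v * (t ^ 2 - 2 * t * xS v)
          = t ^ 2 * (∑ v ∈ Sᶜ, hdeg e δe v) - 2 * t * ∑ v ∈ Sᶜ, hdeg e δe v * xS v := by
        rw [Finset.mul_sum, Finset.mul_sum, ← Finset.sum_sub_distrib]
        exact Finset.sum_congr rfl fun v _ => by ring
      rw [this, hp, hW, hvol]
    -- perturbed Qe bound
    have hQxt : ∑ ε : E, Qe e δe ε xt
        ≤ (1 + σ) * ∑ ε : E, Qe e δe ε xS + (1 + 1/σ) * t ^ 2 * cut := by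
      calc ∑ ε : E, Qe e δe ε xt
          ≤ ∑ ε : E, ((1 + σ) * Qe e δe ε xS + (1 + 1/σ) * t ^ 2 * hsplit e δe ε S) :=
            Finset.sum_le_sum fun ε _ => Qe_shift_S e δe hδe S ε xS ht.le hσ
        _ = (1 + σ) * ∑ ε : E, Qe e δe ε xS + (1 + 1/σ) * t ^ 2 * cut := by
            rw [Finset.sum_add_distrib, ← Finset.mul_sum, ← Finset.mul_sum, hcut', hcut]
    -- optimality at z
    have hopt := hxS z
    unfold Qobj at hopt
    rw [Finset.sum_congr rfl fun ε _ => hQz ε, hseedz] at hopt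
    have hstep : 2 * γ * t * p ≤ γ * t ^ 2 * W
        + σ * (∑ ε : E, Qe e δe ε xS) + (1 + 1/σ) * t ^ 2 * cut := by
      nlinarith [hopt, hQxt]
    have hσQ : σ * (∑ ε : E, Qe e δe ε xS) ≤ σ * (cut / vol ^ 2) :=
      mul_le_mul_of_nonneg_left hQsum hσ.le
    have he1 : σ * (cut / vol ^ 2) = t * (cut / vol) := by
      rw [hσdef]; field_simp
    have he2 : (1 + 1/σ) * t ^ 2 * cut = t ^ 2 * cut + t * (cut / vol) := by
      rw [hσdef]; field_simp
    rw [he1] at hσQ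
    rw [he2] at hstep
    linarith
  -- conclude by letting t → 0
  refine le_of_forall_pos_le_add fun η hη => ?_
  set D : ℝ := γ * W + cut with hD
  have hD0 : 0 ≤ D := by positivity
  set t : ℝ := 2 * γ * η / (D + 1) with htdef
  have ht : 0 < t := by positivity
  have h2γt : 0 < 2 * γ * t := by positivity
  have hfrac : p ≤ (γ * t ^ 2 * W + 2 * t * (cut / vol) + t ^ 2 * cut) / (2 * γ * t) := by
    rw [le_div_iff₀ h2γt]
    nlinarith [key t ht]
  have heq : (γ * t ^ 2 * W + 2 * t * (cut / vol) + t ^ 2 * cut) / (2 * γ * t)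
      = cut / (γ * vol) + t * D / (2 * γ) := by
    rw [hD]
    field_simp
    ring
  rw [heq] at hfrac
  have hlast : t * D / (2 * γ) ≤ η := by
    rw [htdef]
    rw [div_mul_eq_mul_div, div_div]
    rw [div_le_iff₀ (by positivity)]
    nlinarith [hD0, hη]
  linarith

end aux4
end aux3

end

open scoped Classical in
/-- Good-seed sampling lemma: if `v ∈ S` is sampled from a distribution `μ` supported
on `S` whose expected diffusion mass outside `S` is at most `c` times that of the
`S`-seeded diffusion, then with probability at least `1/2`,
`p(γ,{v})(S) ≥ 1 − 2cφ(S)/γ`. -/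
theorem good_seed_sampling {V E : Type*} [Fintype V] [Fintype E] [DecidableEq V]
    (e : E → Finset V) (δe : E → ℝ)
    (hcard : ∀ ε, 2 ≤ (e ε).card) (hδe : ∀ ε, 1 ≤ δe ε)
    (hcov : ∀ v : V, ∃ ε, v ∈ e ε)
    (γ c : ℝ) (hγ : 0 < γ) (hc : 0 < c)
    (S : Finset V) (hS0 : 0 < hvol e δe S) (hS2 : hvol e δe S ≤ hM e δe / 2)
    (μ : V → ℝ) (hμ0 : ∀ v, 0 ≤ μ v) (hμsupp : ∀ v, v ∉ S → μ v = 0)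
    (hμ1 : ∑ v : V, μ v = 1)
    (xseed : V → V → ℝ)
    (hxseed : ∀ v ∈ S, ∀ y : V → ℝ,
      Qobj e δe γ {v} (xseed v) ≤ Qobj e δe γ {v} y)
    (xS : V → ℝ) (hxS : ∀ y : V → ℝ, Qobj e δe γ S xS ≤ Qobj e δe γ S y)
    (hexp : ∑ v : V, μ v * (∑ u ∈ Sᶜ, hdeg e δe u * xseed v u) ≤
      c * ∑ u ∈ Sᶜ, hdeg e δe u * xS u) :
    (1 : ℝ) / 2 ≤ ∑ v ∈ univ.filter
      (fun v => 1 - 2 * c * hcond e δe S / γ ≤ ∑ u ∈ S, hdeg e δe u * xseed v u),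
        μ v := by
  have hφ : hcond e δe S = hcut e δe S / hvol e δe S := by
    unfold hcond
    rw [min_eq_left (by linarith : hvol e δe S ≤ hM e δe - hvol e δe S)]
  have hcut0 : 0 ≤ hcut e δe S := hcut_nonneg e δe hδe S
  set B : ℝ := 2 * c * hcond e δe S / γ with hBdef
  have hB0 : 0 ≤ B := by
    rw [hBdef, hφ]; positivity
  have hpS : ∑ u ∈ Sᶜ, hdeg e δe u * xS u ≤ hcut e δe S / (γ * hvol e δe S) :=
    pS_bound e δe hcard hδe hcov hγ S hS0 xS hxS
  have hcB : c * ∑ u ∈ Sᶜ, hdeg e δe u * xS u ≤ B / 2 := by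
    have h1 := mul_le_mul_of_nonneg_left hpS hc.le
    have h2 : c * (hcut e δe S / (γ * hvol e δe S)) = B / 2 := by
      rw [hBdef, hφ]
      field_simp
    linarith
  have hvmass : ∀ v ∈ S, (∑ u ∈ S, hdeg e δe u * xseed v u)
      + (∑ u ∈ Sᶜ, hdeg e δe u * xseed v u) = 1 := by
    intro v hv
    have hvol_v : 0 < hvol e δe {v} := by
      rw [hvol, Finset.sum_singleton]
      linarith [one_le_hdeg e δe hcard hδe hcov v]
    have hm := total_mass_eq_one e δe hcard hδe hcov hγ {v} hvol_v (xseed v) (hxseed v hv)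
    rw [← hm]
    exact Finset.sum_add_sum_compl S _
  have hnonneg : ∀ v ∈ S, 0 ≤ ∑ u ∈ Sᶜ, hdeg e δe u * xseed v u := by
    intro v hv
    refine Finset.sum_nonneg fun u _ => mul_nonneg (hdeg_nonneg e δe hcard hδe hcov u) ?_
    have hvol_v : 0 < hvol e δe {v} := by
      rw [hvol, Finset.sum_singleton]
      linarith [one_le_hdeg e δe hcard hδe hcov v]
    exact minimizer_nonneg e δe hcard hδe hcov hγ {v} hvol_v (xseed v) (hxseed v hv) u
  have hμpSc : ∀ v : V, 0 ≤ μ v * (∑ u ∈ Sᶜ, hdeg e δe u * xseed v u) := by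
    intro v
    by_cases hv : v ∈ S
    · exact mul_nonneg (hμ0 v) (hnonneg v hv)
    · rw [hμsupp v hv, zero_mul]
  set cond : V → Prop := fun v => 1 - B ≤ ∑ u ∈ S, hdeg e δe u * xseed v u with hcond'
  have hsum_split : (∑ v ∈ univ.filter cond, μ v) + (∑ v ∈ univ.filter (fun v => ¬ cond v), μ v) = 1 := by
    rw [Finset.sum_filter_add_sum_filter_not, hμ1]
  suffices hN : ∑ v ∈ univ.filter (fun v => ¬ cond v), μ v ≤ 1/2 by linarith
  have hmain : B * ∑ v ∈ univ.filter (fun v => ¬ cond v), μ v ≤ B / 2 := by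
    calc B * ∑ v ∈ univ.filter (fun v => ¬ cond v), μ v
        = ∑ v ∈ univ.filter (fun v => ¬ cond v), μ v * B := by
          rw [Finset.mul_sum]
          exact Finset.sum_congr rfl fun v _ => mul_comm B (μ v)
      _ ≤ ∑ v ∈ univ.filter (fun v => ¬ cond v), μ v * (∑ u ∈ Sᶜ, hdeg e δe u * xseed v u) := by
          refine Finset.sum_le_sum fun v hv => ?_
          rcases eq_or_lt_of_le (hμ0 v) with hμv | hμv
          · rw [← hμv, zero_mul, zero_mul]
          · have hvS : v ∈ S := by
              by_contra h
              rw [hμsupp v h] at hμv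
              exact lt_irrefl 0 hμv
            have hcf : ¬ cond v := (Finset.mem_filter.mp hv).2
            rw [hcond'] at hcf
            push_neg at hcf
            have := hvmass v hvS
            have hgt : B ≤ ∑ u ∈ Sᶜ, hdeg e δe u * xseed v u := by linarith
            exact mul_le_mul_of_nonneg_left hgt hμv.le
      _ ≤ ∑ v : V, μ v * (∑ u ∈ Sᶜ, hdeg e δe u * xseed v u) :=
          Finset.sum_le_sum_of_subset_of_nonneg (Finset.filter_subset _ _)
            (fun v _ _ => hμpSc v)
      _ ≤ c * ∑ u ∈ Sᶜ, hdeg e δe u * xS u := hexp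
      _ ≤ B / 2 := hcB
  by_cases hBpos : 0 < B
  · have hB2 : B / 2 = B * (1/2) := by ring
    rw [hB2] at hmain
    exact (mul_le_mul_iff_right₀ hBpos).mp hmain
  · have hBz : B = 0 := le_antisymm (not_lt.mp hBpos) hB0
    have hWz : ∑ v ∈ univ.filter (fun v => ¬ cond v), μ v = 0 := by
      refine Finset.sum_eq_zero fun v hv => ?_
      by_contra hμv
      have hμpos : 0 < μ v := (hμ0 v).lt_of_ne (Ne.symm hμv)
      have hvS : v ∈ S := by
        by_contra h
        exact hμv (hμsupp v h)
      have hcf : ¬ cond v := (Finset.mem_filter.mp hv).2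
      rw [hcond'] at hcf
      push_neg at hcf
      have hmass := hvmass v hvS
      have hgt : 0 < ∑ u ∈ Sᶜ, hdeg e δe u * xseed v u := by
        rw [← hBz]; linarith
      have hpos : 0 < ∑ w : V, μ w * (∑ u ∈ Sᶜ, hdeg e δe u * xseed w u) := by
        refine Finset.sum_pos' (fun w _ => hμpSc w) ⟨v, Finset.mem_univ v, ?_⟩
        exact mul_pos hμpos hgt
      have hle : ∑ w : V, μ w * (∑ u ∈ Sᶜ, hdeg e δe u * xseed w u) ≤ 0 := by
        calc ∑ w : V, μ w * (∑ u ∈ Sᶜ, hdeg e δe u * xseed w u)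
            ≤ c * ∑ u ∈ Sᶜ, hdeg e δe u * xS u := hexp
          _ ≤ B / 2 := hcB
          _ = 0 := by rw [hBz]; ring
      linarith
    rw [hWz]
    norm_num
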